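/- arXiv:1905.08202 — 13 statements merged into one kernel-verified Lean document; each statement's English description precedes it below -/
import Mathlib

section
/- Let X be a linear order and let n, m be natural numbers. If f : X → ℕ is a based function with f(x) < n for all x ∈ X, and g : X → ℕ is a based function with g(x) < m for all x ∈ X, then the function h : X → ℕ defined by h(x) = m·f(x) + g(x) is based and satisfies h(x) < n·m for all x ∈ X. -/
/-- A function `f : X → ℕ` on a linear order `X` is *based* if it is antitone and
every nonempty fiber `f ⁻¹' {n}` either has a least element or is downward closed
(an initial segment of `X`). -/
def Based {X : Type*} [LinearOrder X] (f : X → ℕ) : Prop :=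
  Antitone f ∧ ∀ n : ℕ, (f ⁻¹' {n}).Nonempty →
    (∃ b, IsLeast (f ⁻¹' {n}) b) ∨ ∀ x ∈ f ⁻¹' {n}, ∀ y ≤ x, y ∈ f ⁻¹' {n}

theorem based_mul_add_based {X : Type*} [LinearOrder X] (n m : ℕ) (f g : X → ℕ)
    (hf : Based f) (hfn : ∀ x, f x < n) (hg : Based g) (hgm : ∀ x, g x < m) :
    Based (fun x => m * f x + g x) ∧ ∀ x, m * f x + g x < n * m := by
  obtain ⟨hfa, hfb⟩ := hf
  obtain ⟨hga, hgb⟩ := hg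
  constructor
  · constructor
    · intro x y hxy
      exact add_le_add (Nat.mul_le_mul_left m (hfa hxy)) (hga hxy)
    · intro k ⟨x0, hx0⟩
      simp only [Set.mem_preimage, Set.mem_singleton_iff] at hx0
      have hm : 0 < m := lt_of_le_of_lt (Nat.zero_le _) (hgm x0)
      set a := k / m with ha
      set b := k % m with hb
      have key : ∀ x : X, m * f x + g x = k ↔ f x = a ∧ g x = b := by
        intro x
        constructor
        · intro h
          have h1 : k / m = f x := by
            rw [← h, Nat.mul_add_div hm, Nat.div_eq_of_lt (hgm x), Nat.add_zero]
          have h2 : k % m = g x := by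
            rw [← h, Nat.mul_add_mod, Nat.mod_eq_of_lt (hgm x)]
          exact ⟨h1.symm, h2.symm⟩
        · rintro ⟨h1, h2⟩
          rw [h1, h2, ha, hb]
          exact Nat.div_add_mod k m
      have hx0a : f x0 = a := ((key x0).1 hx0).1
      have hx0b : g x0 = b := ((key x0).1 hx0).2
      have hAne : (f ⁻¹' {a}).Nonempty := ⟨x0, hx0a⟩
      have hBne : (g ⁻¹' {b}).Nonempty := ⟨x0, hx0b⟩
      rcases hgb b hBne with ⟨c, hc⟩ | hB
      · -- g-fiber has a least element c
        have hcx0 : c ≤ x0 := hc.2 hx0b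
        by_cases hfc : f c = a
        · left
          refine ⟨c, (key c).2 ⟨hfc, hc.1⟩, ?_⟩
          intro x hx
          exact hc.2 ((key x).1 hx).2
        · rcases hfb a hAne with ⟨d, hd⟩ | hA
          · left
            have hdx0 : d ≤ x0 := hd.2 hx0a
            have hcd : c ≤ d := by
              by_contra hcontra
              push_neg at hcontra
              have h1 : f c ≤ f d := hfa hcontra.le
              have h2 : f x0 ≤ f c := hfa hcx0
              rw [hd.1, hx0a] at *
              exact hfc (le_antisymm h1 h2)
            have hgd : g d = b := by
              have h1 : g d ≤ g c := hga hcd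
              have h2 : g x0 ≤ g d := hga hdx0
              rw [hc.1, hx0b] at *
              exact le_antisymm h1 h2
            refine ⟨d, (key d).2 ⟨hd.1, hgd⟩, ?_⟩
            intro x hx
            exact hd.2 ((key x).1 hx).1
          · exact absurd (hA x0 hx0a c hcx0) hfc
      · -- g-fiber is downward closed
        rcases hfb a hAne with ⟨d, hd⟩ | hA
        · left
          have hdx0 : d ≤ x0 := hd.2 hx0a
          have hgd : g d = b := hB x0 hx0b d hdx0
          refine ⟨d, (key d).2 ⟨hd.1, hgd⟩, ?_⟩
          intro x hx
          exact hd.2 ((key x).1 hx).1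
        · right
          intro x hx y hxy
          obtain ⟨h1, h2⟩ := (key x).1 hx
          exact (key y).2 ⟨hA x h1 y hxy, hB x h2 y hxy⟩
  · intro x
    have h1 : f x + 1 ≤ n := hfn x
    have h2 : g x < m := hgm x
    calc m * f x + g x < m * f x + m := by omega
      _ = m * (f x + 1) := by ring
      _ ≤ m * n := Nat.mul_le_mul_left m h1
      _ = n * m := Nat.mul_comm m n
end

section
/- Let X be a linear order, let f, g : X → ℕ be antitone functions with g(x) < m for all x ∈ X, and set h(x) = m·f(x) + g(x). Let i = m·j + k with k < m. If the fiber h⁻¹({i}) is nonempty, b_f is the least element of f⁻¹({j}), and b_g is the least element of g⁻¹({k}), then max(b_f, b_g) is the least element of h⁻¹({i}). -/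
theorem isLeast_fiber_mul_add {X : Type*} [LinearOrder X] (m j k i : ℕ) (f g : X → ℕ)
    (hf : Antitone f) (hg : Antitone g) (hgm : ∀ x, g x < m)
    (hk : k < m) (hi : i = m * j + k)
    (hne : ((fun x => m * f x + g x) ⁻¹' {i}).Nonempty)
    (bf bg : X) (hbf : IsLeast (f ⁻¹' {j}) bf) (hbg : IsLeast (g ⁻¹' {k}) bg) :
    IsLeast ((fun x => m * f x + g x) ⁻¹' {i}) (max bf bg) := by
  have key : ∀ x, m * f x + g x = i ↔ (f x = j ∧ g x = k) := by
    intro x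
    constructor
    · intro h
      subst hi
      have hm : 0 < m := lt_of_le_of_lt (Nat.zero_le _) hk
      have h1 : f x = j := by
        have := Nat.add_mul_div_left (g x) (f x) hm
        have h2 : (m * f x + g x) / m = f x := by
          rw [Nat.add_comm, Nat.add_mul_div_left _ _ hm, Nat.div_eq_of_lt (hgm x),
            Nat.zero_add]
        have h3 : (m * j + k) / m = j := by
          rw [Nat.add_comm, Nat.add_mul_div_left _ _ hm, Nat.div_eq_of_lt hk, Nat.zero_add]
        rw [h] at h2; rw [h3] at h2; exact h2.symm
      refine ⟨h1, ?_⟩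
      rw [h1] at h; omega
    · rintro ⟨h1, h2⟩; rw [h1, h2, hi]
  obtain ⟨x, hx⟩ := hne
  simp only [Set.mem_preimage, Set.mem_singleton_iff] at hx
  obtain ⟨hfx, hgx⟩ := (key x).mp hx
  have hbfx : bf ≤ x := hbf.2 hfx
  have hbgx : bg ≤ x := hbg.2 hgx
  have hmx : max bf bg ≤ x := max_le hbfx hbgx
  constructor
  · show m * f (max bf bg) + g (max bf bg) = i
    rw [key]
    constructor
    · have u1 : f (max bf bg) ≤ j := hbf.1 ▸ hf (le_max_left bf bg)
      have u2 : j ≤ f (max bf bg) := hfx ▸ hf hmx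
      omega
    · have u1 : g (max bf bg) ≤ k := hbg.1 ▸ hg (le_max_right bf bg)
      have u2 : k ≤ g (max bf bg) := hgx ▸ hg hmx
      omega
  · intro y hy
    simp only [Set.mem_preimage, Set.mem_singleton_iff] at hy
    obtain ⟨h1, h2⟩ := (key y).mp hy
    exact max_le (hbf.2 h1) (hbg.2 h2)
end

section
/- Let X be a type, m ∈ ℕ, and f, f', g, g' : X → ℕ with g(x) < m and g'(x) < m for all x ∈ X. If m·f(x) + g(x) = m·f'(x) + g'(x) for all x ∈ X, then f = f' and g = g'. Consequently, for a linear order X and n, m ∈ ℕ, the map (f, g) ↦ (x ↦ m·f(x) + g(x)) is an injection from A_n × A_m into A_{n·m}, where A_k denotes the set of based functions X → ℕ with all values < k. -/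
private lemma key_arith (m a b a' b' : ℕ) (hb : b < m) (hb' : b' < m)
    (h : m * a + b = m * a' + b') : a = a' ∧ b = b' := by
  have ha : a = a' := by
    rcases lt_trichotomy a a' with h1 | h1 | h1
    · have h2 : m * (a + 1) ≤ m * a' := Nat.mul_le_mul_left m h1
      have h3 : m * (a + 1) = m * a + m := by ring
      omega
    · exact h1
    · have h2 : m * (a' + 1) ≤ m * a := Nat.mul_le_mul_left m h1
      have h3 : m * (a' + 1) = m * a' + m := by ring
      omega
  subst ha
  omega

private lemma based_comb {X : Type*} [LinearOrder X] (m : ℕ) (f g : X → ℕ)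
    (hf : Based f) (hg : Based g) (hgm : ∀ x, g x < m) :
    Based (fun x => m * f x + g x) := by
  constructor
  · intro x y hxy
    have h1 : m * f y ≤ m * f x := Nat.mul_le_mul_left m (hf.1 hxy)
    have h2 : g y ≤ g x := hg.1 hxy
    simp only
    omega
  · rintro k ⟨s, hs⟩
    have hs' : m * f s + g s = k := hs
    have hchar : ∀ t, (m * f t + g t = k) ↔ (f t = f s ∧ g t = g s) := by
      intro t
      constructor
      · intro ht
        exact key_arith m (f t) (g t) (f s) (g s) (hgm t) (hgm s) (ht.trans hs'.symm)
      · rintro ⟨h1, h2⟩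
        rw [h1, h2]; exact hs'
    rcases hf.2 (f s) ⟨s, rfl⟩ with ⟨a₀, ha₀⟩ | hA
    · rcases hg.2 (g s) ⟨s, rfl⟩ with ⟨b₀, hb₀⟩ | hB
      · -- both fibers have least elements: max is least element
        left
        have has : a₀ ≤ s := ha₀.2 rfl
        have hbs : b₀ ≤ s := hb₀.2 rfl
        have hfa : f a₀ = f s := ha₀.1
        have hgb : g b₀ = g s := hb₀.1
        have hfc : f (max a₀ b₀) = f s := by
          rcases le_total a₀ b₀ with h | h
          · have h1 : f b₀ ≤ f a₀ := hf.1 h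
            have h2 : f s ≤ f b₀ := hf.1 hbs
            rw [max_eq_right h]; omega
          · rw [max_eq_left h]; exact hfa
        have hgc : g (max a₀ b₀) = g s := by
          rcases le_total b₀ a₀ with h | h
          · have h1 : g a₀ ≤ g b₀ := hg.1 h
            have h2 : g s ≤ g a₀ := hg.1 has
            rw [max_eq_left h]; omega
          · rw [max_eq_right h]; exact hgb
        refine ⟨max a₀ b₀, ?_, ?_⟩
        · show m * f (max a₀ b₀) + g (max a₀ b₀) = k
          rw [hfc, hgc]; exact hs'
        · intro t ht
          obtain ⟨h1, h2⟩ := (hchar t).mp ht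
          exact max_le (ha₀.2 h1) (hb₀.2 h2)
      · -- f-fiber has least, g-fiber downward closed: a₀ is least
        left
        have has : a₀ ≤ s := ha₀.2 rfl
        have hga : g a₀ = g s := hB s rfl a₀ has
        have hfa : f a₀ = f s := ha₀.1
        refine ⟨a₀, ?_, fun t ht => ha₀.2 ((hchar t).mp ht).1⟩
        show m * f a₀ + g a₀ = k
        rw [hfa, hga]; exact hs'
    · rcases hg.2 (g s) ⟨s, rfl⟩ with ⟨b₀, hb₀⟩ | hB
      · -- g-fiber has least, f-fiber downward closed: b₀ is least
        left
        have hbs : b₀ ≤ s := hb₀.2 rfl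
        have hfb : f b₀ = f s := hA s rfl b₀ hbs
        have hgb : g b₀ = g s := hb₀.1
        refine ⟨b₀, ?_, fun t ht => hb₀.2 ((hchar t).mp ht).2⟩
        show m * f b₀ + g b₀ = k
        rw [hfb, hgb]; exact hs'
      · -- both downward closed
        right
        intro x hx y hyx
        obtain ⟨h1, h2⟩ := (hchar x).mp hx
        have hfy : f y = f s := hA x h1 y hyx
        have hgy : g y = g s := hB x h2 y hyx
        show m * f y + g y = k
        rw [hfy, hgy]; exact hs'

private lemma part1 : ∀ (X : Type*) (m : ℕ) (f f' g g' : X → ℕ),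
    (∀ x, g x < m) → (∀ x, g' x < m) →
    (∀ x, m * f x + g x = m * f' x + g' x) → f = f' ∧ g = g' := by
  intro X m f f' g g' hg hg' h
  constructor
  · funext x
    exact (key_arith m (f x) (g x) (f' x) (g' x) (hg x) (hg' x) (h x)).1
  · funext x
    exact (key_arith m (f x) (g x) (f' x) (g' x) (hg x) (hg' x) (h x)).2

theorem mul_add_injective_and_based_injection :
    (∀ (X : Type*) (m : ℕ) (f f' g g' : X → ℕ),
      (∀ x, g x < m) → (∀ x, g' x < m) →
      (∀ x, m * f x + g x = m * f' x + g' x) → f = f' ∧ g = g') ∧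
    (∀ (X : Type*) [LinearOrder X] (n m : ℕ),
      ∃ h : {f : X → ℕ // Based f ∧ ∀ x, f x < n} × {f : X → ℕ // Based f ∧ ∀ x, f x < m} →
            {f : X → ℕ // Based f ∧ ∀ x, f x < n * m},
        Function.Injective h ∧
        ∀ p x, (h p).1 x = m * p.1.1 x + p.2.1 x) := by
  refine ⟨part1, ?_⟩
  intro X _ n m
  refine ⟨fun p => ⟨fun x => m * p.1.1 x + p.2.1 x,
    based_comb m p.1.1 p.2.1 p.1.2.1 p.2.2.1 p.2.2.2, ?_⟩, ?_, fun p x => rfl⟩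
  · intro x
    show m * p.1.1 x + p.2.1 x < n * m
    have h1 : p.1.1 x < n := p.1.2.2 x
    have h2 : p.2.1 x < m := p.2.2.2 x
    have h3 : m * (p.1.1 x + 1) ≤ m * n := Nat.mul_le_mul_left m h1
    have h4 : m * (p.1.1 x + 1) = m * p.1.1 x + m := by ring
    have h5 : m * n = n * m := Nat.mul_comm m n
    omega
  · intro p q hpq
    have heq : (fun x => m * p.1.1 x + p.2.1 x) = (fun x => m * q.1.1 x + q.2.1 x) :=
      congrArg Subtype.val hpq
    obtain ⟨h1, h2⟩ := part1 X m p.1.1 q.1.1 p.2.1 q.2.1 p.2.2.2 q.2.2.2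
      (fun x => congrFun heq x)
    exact Prod.ext (Subtype.ext h1) (Subtype.ext h2)
end

section
/- Let X be a linear order with no least element. Then the map sending b ∈ X to the function f_b : X → ℕ defined by f_b(x) = 1 if x < b and f_b(x) = 0 otherwise, is a bijection from X onto the set of nonconstant based functions f : X → ℕ with f(x) < 2 for all x. -/
theorem bijOn_nonconstant_based_lt_two {X : Type*} [LinearOrder X] [NoMinOrder X] :
    Set.BijOn (fun b : X => fun x : X => if x < b then 1 else 0) Set.univ
      {f : X → ℕ | Based f ∧ (∀ x, f x < 2) ∧ ∃ x y, f x ≠ f y} := by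
  refine ⟨?maps, ?inj, ?surj⟩
  · intro b _
    refine ⟨⟨?_, ?_⟩, ?_, ?_⟩
    · intro x y hxy
      by_cases hy : y < b
      · simp [hy, lt_of_le_of_lt hxy hy]
      · simp [hy]
    · intro n hn
      rcases hn with ⟨x, hx⟩
      simp only [Set.mem_preimage, Set.mem_singleton_iff] at hx
      by_cases hxb : x < b
      · simp only [if_pos hxb] at hx
        subst hx
        right
        intro z hz y hy
        simp only [Set.mem_preimage, Set.mem_singleton_iff] at hz ⊢
        split_ifs with h
        · rfl
        · exfalso
          rw [if_neg (fun h2 : z < b => h (lt_of_le_of_lt hy h2))] at hz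
          exact one_ne_zero hz.symm
      · simp only [if_neg hxb] at hx
        subst hx
        left
        refine ⟨b, ?_, ?_⟩
        · simp [Set.mem_preimage]
        · intro y hy
          simp only [Set.mem_preimage, Set.mem_singleton_iff] at hy
          by_contra h
          push_neg at h
          simp [if_pos h] at hy
    · intro x; by_cases h : x < b <;> simp [h]
    · obtain ⟨a, ha⟩ := exists_lt b
      exact ⟨a, b, by simp [ha]⟩
  · intro a _ b _ h
    simp only at h
    by_contra hne
    rcases lt_or_gt_of_ne hne with hab | hab
    · have := congrFun h a
      simp [hab, lt_irrefl] at this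
    · have := congrFun h b
      simp [hab, lt_irrefl] at this
  · rintro f ⟨⟨hanti, hfib⟩, hlt2, x0, y0, hne⟩
    -- values are 0 or 1; there's some point with value 1 and some with value 0
    have hval : ∀ x, f x = 0 ∨ f x = 1 := by
      intro x; have := hlt2 x; omega
    -- fiber of 0 is nonempty
    have h01 : ∃ u v, f u = 1 ∧ f v = 0 := by
      rcases hval x0 with h | h <;> rcases hval y0 with h' | h'
      · exact absurd (h.trans h'.symm) hne
      · exact ⟨y0, x0, h', h⟩
      · exact ⟨x0, y0, h, h'⟩
      · exact absurd (h.trans h'.symm) hne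
    obtain ⟨u, v, hu, hv⟩ := h01
    have hne0 : (f ⁻¹' {0}).Nonempty := ⟨v, hv⟩
    have hleast : ∃ b, IsLeast (f ⁻¹' {0}) b := by
      rcases hfib 0 hne0 with h | h
      · exact h
      · exfalso
        rcases le_total u v with huv | hvu
        · have := h v hv u huv
          simp only [Set.mem_preimage, Set.mem_singleton_iff] at this
          omega
        · have := hanti hvu
          omega
    obtain ⟨b, hb0, hbl⟩ := hleast
    simp only [Set.mem_preimage, Set.mem_singleton_iff] at hb0
    refine ⟨b, Set.mem_univ b, ?_⟩
    funext x
    by_cases hx : x < b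
    · simp only [if_pos hx]
      rcases hval x with h | h
      · exact absurd (hbl h) (not_le.mpr hx)
      · exact h.symm
    · simp only [if_neg hx]
      have := hanti (not_lt.mp hx)
      omega
end

section
/- Let X be a linear order, m ∈ ℕ, and f : X → ℕ a based function with f(x) < m for all x. For any x ∈ X, if there exists a base point of f that is ≤ x, then the set of base points of f that are ≤ x has a greatest element b, and f(x) = f(b). -/
theorem greatest_basePoint_below {X : Type*} [LinearOrder X] (m : ℕ) (f : X → ℕ)
    (hf : Based f) (hfm : ∀ x, f x < m) (x : X)
    (hx : ∃ b, IsLeast (f ⁻¹' {f b}) b ∧ b ≤ x) :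
    ∃ b, IsGreatest {c : X | IsLeast (f ⁻¹' {f c}) c ∧ c ≤ x} b ∧ f x = f b := by
  obtain ⟨hanti, hbased⟩ := hf
  set S : Set ℕ := {n | ∃ c, IsLeast (f ⁻¹' {f c}) c ∧ c ≤ x ∧ f c = n} with hS
  have hSne : S.Nonempty := by
    obtain ⟨b, hb, hbx⟩ := hx
    exact ⟨f b, b, hb, hbx, rfl⟩
  obtain ⟨n, hnS, hmin⟩ := Nat.lt_wfRel.wf.has_min S hSne
  obtain ⟨b, hb, hbx, hfb⟩ := hnS
  have hleast : ∀ k ∈ S, n ≤ k := fun k hk => le_of_not_gt (hmin k hk)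
  refine ⟨b, ⟨⟨hb, hbx⟩, ?_⟩, ?_⟩
  · rintro c ⟨hc, hcx⟩
    have hn : n ≤ f c := hleast _ ⟨c, hc, hcx, rfl⟩
    rcases eq_or_lt_of_le hn with h | h
    · -- f c = f b, so c = b
      have : f c = f b := by omega
      have h1 : c ≤ b := hc.2 (by simp [Set.mem_preimage, this])
      have h2 : b ≤ c := hb.2 (by simp [Set.mem_preimage, this.symm])
      exact le_of_eq (le_antisymm h1 h2)
    · by_contra hbc
      push_neg at hbc
      have := hanti hbc.le
      omega
  · have hxb : f x ≤ f b := hanti hbx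
    rcases eq_or_lt_of_le hxb with h | h
    · exact h
    · exfalso
      have hne : (f ⁻¹' {f x}).Nonempty := ⟨x, rfl⟩
      rcases hbased (f x) hne with ⟨b', hb'⟩ | hdc
      · have hb'x : b' ≤ x := hb'.2 rfl
        have : f b' = f x := hb'.1
        have hn' : n ≤ f b' := hleast _ ⟨b', by rwa [this], hb'x, rfl⟩
        omega
      · have : b ∈ f ⁻¹' {f x} := hdc x rfl b hbx
        simp only [Set.mem_preimage, Set.mem_singleton_iff] at this
        omega
end

section
/- Let X be a linear order, m ∈ ℕ, and E ⊆ X a countable set. Then the set of based functions f : X → ℕ such that f(x) < m for all x and every base point of f belongs to E, is countable. -/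
open Classical in
/-- The least element of the fiber of `f` at `n`, if it exists. -/
noncomputable def baseCode {X : Type*} [LinearOrder X] (f : X → ℕ) (n : ℕ) : Option X :=
  if h : ∃ b, IsLeast (f ⁻¹' {n}) b then some h.choose else none

open Classical in
/-- The value whose fiber is nonempty but has no least element, if it exists. -/
noncomputable def topCode {X : Type*} [LinearOrder X] (f : X → ℕ) : Option ℕ :=
  if h : ∃ n, (f ⁻¹' {n}).Nonempty ∧ ¬∃ b, IsLeast (f ⁻¹' {n}) b then some h.choose else none

/-- At most one fiber of a based function is nonempty without a least element. -/
theorem based_uniq_no_least {X : Type*} [LinearOrder X] {f : X → ℕ} (hf : Based f)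
    {n k : ℕ} (hn : (f ⁻¹' {n}).Nonempty) (hln : ¬∃ b, IsLeast (f ⁻¹' {n}) b)
    (hk : (f ⁻¹' {k}).Nonempty) (hlk : ¬∃ b, IsLeast (f ⁻¹' {k}) b) : n = k := by
  by_contra hne
  wlog hlt : n < k generalizing n k
  · exact this hk hlk hn hln (Ne.symm hne) (by omega)
  obtain ⟨y, hy⟩ := hn
  obtain ⟨x, hx⟩ := hk
  have hdc := (hf.2 n ⟨y, hy⟩).resolve_left hln
  rcases le_total y x with hyx | hxy
  · have h1 : f x ≤ f y := hf.1 hyx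
    simp only [Set.mem_preimage, Set.mem_singleton_iff] at hx hy
    omega
  · have h2 := hdc y hy x hxy
    simp only [Set.mem_preimage, Set.mem_singleton_iff] at h2 hx
    omega

theorem countable_based_with_basePoints_in {X : Type*} [LinearOrder X] (m : ℕ)
    (E : Set X) (hE : E.Countable) :
    {f : X → ℕ | Based f ∧ (∀ x, f x < m) ∧
      ∀ b : X, IsLeast (f ⁻¹' {f b}) b → b ∈ E}.Countable := by
  classical
  set S := {f : X → ℕ | Based f ∧ (∀ x, f x < m) ∧
      ∀ b : X, IsLeast (f ⁻¹' {f b}) b → b ∈ E} with hSdef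
  set φ : (X → ℕ) → (Fin m → Option X) × Option ℕ :=
    fun f => (fun n => baseCode f n, topCode f) with hφdef
  set A : Set (Option X) := insert none (some '' E) with hAdef
  set T : Set ((Fin m → Option X) × Option ℕ) :=
    {g : Fin m → Option X | ∀ n, g n ∈ A} ×ˢ (Set.univ : Set (Option ℕ)) with hTdef
  have hT : T.Countable :=
    (Set.countable_pi fun _ => (hE.image some).insert none).prod Set.countable_univ
  -- the key asymmetric lemma
  have key : ∀ f g, f ∈ S → g ∈ S → φ f = φ g → ∀ x : X, ¬ (f x < g x) := by
    intro f g hf hg hfg x hlt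
    have hc : ∀ n : Fin m, baseCode f n = baseCode g n := fun n =>
      congrFun (congrArg Prod.fst hfg) n
    have ht : topCode f = topCode g := congrArg Prod.snd hfg
    set n := f x with hn
    have hnm : n < m := hf.2.1 x
    have hxfib : x ∈ f ⁻¹' {n} := rfl
    by_cases h : ∃ b, IsLeast (f ⁻¹' {n}) b
    · have hcn := hc ⟨n, hnm⟩
      simp only [baseCode, Fin.val_mk] at hcn
      rw [dif_pos h] at hcn
      by_cases h' : ∃ b, IsLeast (g ⁻¹' {n}) b
      · rw [dif_pos h'] at hcn
        have hbb : h.choose = h'.choose := Option.some_injective _ hcn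
        have hgb : IsLeast (g ⁻¹' {n}) h.choose := hbb ▸ h'.choose_spec
        have hble : h.choose ≤ x := h.choose_spec.2 hxfib
        have h1 : g x ≤ g h.choose := hg.1.1 hble
        have h2 : g h.choose = n := hgb.1
        omega
      · rw [dif_neg h'] at hcn
        exact Option.some_ne_none _ hcn
    · have hex : ∃ k, (f ⁻¹' {k}).Nonempty ∧ ¬∃ b, IsLeast (f ⁻¹' {k}) b :=
        ⟨n, ⟨x, hxfib⟩, h⟩
      have htf : topCode f = some n := by
        simp only [topCode, dif_pos hex]
        exact congrArg some
          (based_uniq_no_least hf.1 hex.choose_spec.1 hex.choose_spec.2 ⟨x, hxfib⟩ h)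
      rw [htf] at ht
      by_cases h' : ∃ k, (g ⁻¹' {k}).Nonempty ∧ ¬∃ b, IsLeast (g ⁻¹' {k}) b
      · have hteq : h'.choose = n := by
          have h3 : topCode g = some h'.choose := by simp only [topCode, dif_pos h']
          rw [h3] at ht
          exact (Option.some_injective _ ht).symm
        obtain ⟨⟨y, hy⟩, hnl⟩ := h'.choose_spec
        rw [hteq] at hy hnl
        have hdc := (hg.1.2 n ⟨y, hy⟩).resolve_left hnl
        rcases le_total y x with hyx | hxy
        · have h1 : g x ≤ g y := hg.1.1 hyx
          simp only [Set.mem_preimage, Set.mem_singleton_iff] at hy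
          omega
        · have h2 := hdc y hy x hxy
          simp only [Set.mem_preimage, Set.mem_singleton_iff] at h2
          omega
      · simp only [topCode, dif_neg h'] at ht
        exact Option.some_ne_none _ ht
  have hinj : Set.InjOn φ S := by
    intro f hf g hg hfg
    funext x
    rcases lt_trichotomy (f x) (g x) with h1 | h1 | h1
    · exact absurd h1 (key f g hf hg hfg x)
    · exact h1
    · exact absurd h1 (key g f hg hf hfg.symm x)
  have hmaps : Set.MapsTo φ S T := by
    intro f hf
    constructor
    · intro n
      show baseCode f n ∈ insert none (some '' E)
      simp only [baseCode]
      split_ifs with h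
      · right
        refine ⟨h.choose, ?_, rfl⟩
        have hb := h.choose_spec
        exact hf.2.2 h.choose (by rw [hb.1]; exact hb)
      · left; rfl
    · trivial
  exact hmaps.countable_of_injOn hinj hT
end

section
/- Let X denote the lexicographic product ω₁ ×ₗ ℚ, and let m ≥ 2. Then the set of based functions f : X → ℕ with f(x) < m for all x has cardinality exactly ℵ₁. -/
/-- The linearly ordered set `ω₁` of countable ordinals, realized as the canonical type
of order type `ω₁ = (ℵ₁).ord`. -/
abbrev OmegaOne : Type := (Cardinal.aleph 1).ord.ToType

/-- The lexicographic product `ω₁ ×ₗ ℚ`. -/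
abbrev KrivineX : Type := OmegaOne ×ₗ ℚ

open Classical in
noncomputable def leastOpt (f : KrivineX → ℕ) (n : ℕ) : Option KrivineX :=
  if h : ∃ b, IsLeast (f ⁻¹' {n}) b then some h.choose else none

lemma leastOpt_eq_some {f : KrivineX → ℕ} {n : ℕ} {b : KrivineX} :
    leastOpt f n = some b ↔ IsLeast (f ⁻¹' {n}) b := by
  unfold leastOpt
  split_ifs with h
  · constructor
    · rintro hs
      have := Option.some_injective _ hs
      exact this ▸ h.choose_spec
    · intro hb
      exact congrArg some (h.choose_spec.unique hb)
  · simp only [reduceCtorEq, false_iff]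
    exact fun hb => h ⟨b, hb⟩

lemma key {f f' : KrivineX → ℕ} (hf' : Based f') {x : KrivineX}
    (hx : f x < f' x) (hL : leastOpt f (f x) = leastOpt f' (f x))
    (hN : (f ⁻¹' {f x}).Nonempty → (f' ⁻¹' {f x}).Nonempty) : False := by
  set n := f x with hn
  by_cases hex : ∃ b, IsLeast (f ⁻¹' {n}) b
  · obtain ⟨b, hb⟩ := hex
    have h1 : leastOpt f n = some b := leastOpt_eq_some.mpr hb
    have h2 : IsLeast (f' ⁻¹' {n}) b := leastOpt_eq_some.mp (hL ▸ h1)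
    have hbx : b ≤ x := hb.2 rfl
    have : f' x ≤ f' b := hf'.1 hbx
    rw [h2.1] at this
    omega
  · have hne' : (f' ⁻¹' {n}).Nonempty := hN ⟨x, rfl⟩
    have hnL : leastOpt f' n = none := by
      rw [← hL]
      unfold leastOpt
      rw [dif_neg hex]
    have hex' : ¬ ∃ b, IsLeast (f' ⁻¹' {n}) b := by
      rintro ⟨b, hb⟩
      rw [leastOpt_eq_some.mpr hb] at hnL
      exact Option.some_ne_none _ hnL
    rcases hf'.2 n hne' with h | hdc
    · exact hex' h
    · obtain ⟨a, ha⟩ := hne'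
      rcases le_total a x with h | h
      · have := hf'.1 h
        rw [Set.mem_preimage, Set.mem_singleton_iff] at ha
        omega
      · have := hdc a ha x h
        rw [Set.mem_preimage, Set.mem_singleton_iff] at this
        omega

lemma mk_krivineX : Cardinal.mk KrivineX = Cardinal.aleph 1 := by
  have h1 : Cardinal.mk OmegaOne = Cardinal.aleph 1 := by
    rw [Cardinal.mk_toType, Cardinal.card_ord]
  have : Cardinal.mk KrivineX = Cardinal.mk (OmegaOne × ℚ) := rfl
  rw [this, Cardinal.mk_prod, Cardinal.lift_id, Cardinal.lift_id, h1, Cardinal.mk_denumerable ℚ]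
  exact Cardinal.mul_eq_left (Cardinal.aleph0_le_aleph 1)
    (by rw [← Cardinal.aleph_zero]; exact Cardinal.aleph_le_aleph.mpr zero_le_one)
    Cardinal.aleph0_ne_zero

theorem mk_based_eq_aleph_one (m : ℕ) (hm : 2 ≤ m) :
    Cardinal.mk {f : KrivineX → ℕ | Based f ∧ ∀ x, f x < m} = Cardinal.aleph 1 := by
  apply le_antisymm
  · -- upper bound: inject into Fin m → Option KrivineX × Prop
    have hinj : Function.Injective
        (fun (f : {f : KrivineX → ℕ | Based f ∧ ∀ x, f x < m}) (k : Fin m) =>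
          (leastOpt f.1 k, ((f.1 ⁻¹' {(k : ℕ)}).Nonempty : Prop))) := by
      rintro ⟨f, hf, hfm⟩ ⟨f', hf', hfm'⟩ heq
      ext x
      simp only [Set.coe_setOf, Set.mem_setOf_eq, Subtype.mk.injEq]
      have hdata : ∀ n : ℕ, n < m →
          leastOpt f n = leastOpt f' n ∧ ((f ⁻¹' {n}).Nonempty ↔ (f' ⁻¹' {n}).Nonempty) := by
        intro n hn
        have := congrFun heq ⟨n, hn⟩
        simp only [Prod.mk.injEq] at this
        exact ⟨this.1, iff_of_eq this.2⟩
      by_contra hne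
      rcases Nat.lt_or_ge (f x) (f' x) with h | h
      · exact key hf' h (hdata (f x) (lt_trans h (hfm' x))).1 (hdata (f x) (lt_trans h (hfm' x))).2.mp
      · have h' : f' x < f x := by omega
        exact key hf h' ((hdata (f' x) (lt_trans h' (hfm x))).1).symm
          (hdata (f' x) (lt_trans h' (hfm x))).2.mpr
    calc Cardinal.mk {f : KrivineX → ℕ | Based f ∧ ∀ x, f x < m}
        ≤ Cardinal.mk (Fin m → Option KrivineX × Prop) := Cardinal.mk_le_of_injective hinj
      _ = Cardinal.mk (Option KrivineX × Prop) ^ (m : Cardinal) := by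
          rw [← Cardinal.power_def, Cardinal.mk_fin]
      _ = Cardinal.aleph 1 := by
          have hO : Cardinal.mk (Option KrivineX × Prop) = Cardinal.aleph 1 := by
            rw [Cardinal.mk_prod, Cardinal.lift_id, Cardinal.lift_id, Cardinal.mk_option,
              Cardinal.mk_Prop, mk_krivineX,
              Cardinal.add_one_eq (Cardinal.aleph0_le_aleph 1)]
            exact Cardinal.mul_eq_left (Cardinal.aleph0_le_aleph 1)
              ((Cardinal.nat_lt_aleph0 2).le.trans (Cardinal.aleph0_le_aleph 1))
              (by norm_num)
          rw [hO, Cardinal.power_natCast]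
          exact Cardinal.power_nat_eq (Cardinal.aleph0_le_aleph 1) (by omega)
  · -- lower bound: inject KrivineX
    have : ∀ a : KrivineX, (fun x => if x < a then 1 else 0) ∈
        {f : KrivineX → ℕ | Based f ∧ ∀ x, f x < m} := by
      intro a
      refine ⟨⟨?_, ?_⟩, ?_⟩
      · intro x y hxy
        by_cases hy : y < a
        · simp [hy, lt_of_le_of_lt hxy hy]
        · simp only [if_neg hy]
          positivity
      · intro n hne
        rcases Nat.eq_zero_or_pos n with rfl | hn
        · left
          refine ⟨a, ?_, ?_⟩
          · simp
          · intro x hx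
            simp only [Set.mem_preimage, Set.mem_singleton_iff] at hx
            by_contra h
            simp [lt_of_not_ge h] at hx
        · right
          intro x hx y hyx
          simp only [Set.mem_preimage, Set.mem_singleton_iff] at hx ⊢
          split_ifs at hx with h
          · rw [if_pos (lt_of_le_of_lt hyx h)]; exact hx
          · omega
      · intro x
        show (if x < a then 1 else 0) < m
        split_ifs <;> omega
    have hinj : Function.Injective
        (fun a : KrivineX => (⟨fun x => if x < a then 1 else 0, this a⟩ :
          {f : KrivineX → ℕ | Based f ∧ ∀ x, f x < m})) := by
      intro a b hab
      simp only [Subtype.mk.injEq] at hab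
      by_contra hne
      rcases lt_or_gt_of_ne hne with h | h
      · have := congrFun hab a
        simp [h, lt_irrefl] at this
      · have := congrFun hab b
        simp [h, lt_irrefl] at this
    calc Cardinal.aleph 1 = Cardinal.mk KrivineX := mk_krivineX.symm
      _ ≤ _ := Cardinal.mk_le_of_injective hinj
end

section
/- Let X denote the lexicographic product ω₁ ×ₗ ℚ. For every x ∈ X, the initial segment Iio(x) = {y ∈ X | y < x}, with the order induced from X, is order-isomorphic to ℚ. In particular, any two such initial segments are order-isomorphic. -/
/-- A lexicographic product with a densely ordered right factor having no max
is densely ordered. -/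
instance KrivineX.denselyOrdered : DenselyOrdered KrivineX where
  dense := by
    rintro _ _ (@⟨a₁, b₁, a₂, b₂, h⟩ | @⟨a, b₁, b₂, h⟩)
    · exact ⟨toLex (a₁, b₁ + 1), Prod.Lex.right _ (by linarith), Prod.Lex.left _ _ h⟩
    · obtain ⟨c, h₁, h₂⟩ := exists_between h
      exact ⟨toLex (a, c), Prod.Lex.right _ h₁, Prod.Lex.right _ h₂⟩

lemma KrivineX.countable_Iio (x : KrivineX) : (Set.Iio x).Countable := by
  have hIic : (Set.Iic (ofLex x).1).Countable := by
    rw [← Set.Iio_union_right]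
    exact ((Cardinal.countable_iff_lt_aleph_one _).2
      (Cardinal.mk_Iio_ord_toType (ofLex x).1)).union (Set.countable_singleton _)
  have h : Set.Iio x ⊆ ofLex ⁻¹' ((Set.Iic (ofLex x).1) ×ˢ (Set.univ : Set ℚ)) := by
    intro y hy
    exact ⟨Prod.Lex.monotone_fst y x hy.le, trivial⟩
  exact ((hIic.prod Set.countable_univ).preimage (Equiv.injective _)).mono h

theorem iio_orderIso_rat :
    (∀ x : KrivineX, Nonempty (↥(Set.Iio x) ≃o ℚ)) ∧
    ∀ x y : KrivineX, Nonempty (↥(Set.Iio x) ≃o ↥(Set.Iio y)) := by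
  have main : ∀ x : KrivineX, Nonempty (↥(Set.Iio x) ≃o ℚ) := by
    intro x
    have : Countable ↥(Set.Iio x) := (KrivineX.countable_Iio x).to_subtype
    exact Order.iso_of_countable_dense _ _
  refine ⟨main, fun x y => ?_⟩
  obtain ⟨f⟩ := main x
  obtain ⟨g⟩ := main y
  exact ⟨f.trans g.symm⟩
end

section
/- Let X denote the lexicographic product ω₁ ×ₗ ℚ. For all a, b ∈ X with a < b, the open interval Ioo(a, b) = {y ∈ X | a < y < b}, with the order induced from X, is order-isomorphic to ℚ. -/
instance : DenselyOrdered KrivineX := by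
  constructor
  intro x y h
  rcases (Prod.Lex.lt_iff (x := x) (y := y)).1 h with h1 | ⟨h1, h2⟩
  · refine ⟨toLex ((ofLex x).1, (ofLex x).2 + 1), ?_, ?_⟩
    · exact Prod.Lex.lt_iff.2 (Or.inr ⟨rfl, lt_add_one _⟩)
    · exact Prod.Lex.lt_iff.2 (Or.inl h1)
  · obtain ⟨q, hq1, hq2⟩ := exists_between h2
    refine ⟨toLex ((ofLex x).1, q), ?_, ?_⟩
    · exact Prod.Lex.lt_iff.2 (Or.inr ⟨rfl, hq1⟩)
    · exact Prod.Lex.lt_iff.2 (Or.inr ⟨h1, hq2⟩)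

theorem ioo_orderIso_rat (a b : KrivineX) (hab : a < b) :
    Nonempty (↥(Set.Ioo a b) ≃o ℚ) := by
  -- countability of the interval
  have hIic : (Set.Iic (ofLex b).1).Countable := by
    rw [← Set.Iio_union_right]
    exact ((Cardinal.countable_iff_lt_aleph_one _).2
      (Cardinal.mk_Iio_ord_toType _)).union (Set.countable_singleton _)
  have hcount : (Set.Ioo a b).Countable := by
    refine Set.Countable.mono ?_ ((hIic.prod Set.countable_univ).image toLex)
    intro y hy
    refine ⟨(ofLex y), ⟨?_, Set.mem_univ _⟩, rfl⟩
    rcases (Prod.Lex.lt_iff (x := y) (y := b)).1 hy.2 with h1 | ⟨h1, _⟩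
    · exact le_of_lt h1
    · exact le_of_eq h1
  haveI : Countable ↥(Set.Ioo a b) := hcount.to_subtype
  haveI : Nonempty ↥(Set.Ioo a b) := Set.nonempty_Ioo_subtype hab
  haveI : NoMinOrder ↥(Set.Ioo a b) := by
    constructor
    rintro ⟨y, hy1, hy2⟩
    obtain ⟨z, hz1, hz2⟩ := exists_between hy1
    exact ⟨⟨z, hz1, hz2.trans hy2⟩, hz2⟩
  haveI : NoMaxOrder ↥(Set.Ioo a b) := by
    constructor
    rintro ⟨y, hy1, hy2⟩
    obtain ⟨z, hz1, hz2⟩ := exists_between hy2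
    exact ⟨⟨z, hy1.trans hz1, hz2⟩, hz1⟩
  exact Order.iso_of_countable_dense _ _
end

section
/- Let X denote the lexicographic product ω₁ ×ₗ ℚ. For all a, x, b ∈ X with a < x < b, there exists an order isomorphism π : X ≃o X such that π(x) ≠ x and π(y) = y for every y not in the open interval Ioo(a, b). -/
/-- Piecewise-linear order automorphism of `ℚ` sending `m` to `c` and fixing
everything outside `(p, q)`. -/
theorem exists_orderIso_rat (p m q c : ℚ) (hpm : p < m) (hmq : m < q)
    (hpc : p < c) (hcm : c < m) :
    ∃ f : ℚ ≃o ℚ, f m = c ∧ ∀ t ∉ Set.Ioo p q, f t = t := by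
  have hmp : (0:ℚ) < m - p := by linarith
  have hqm : (0:ℚ) < q - m := by linarith
  obtain ⟨s1, hs1, hs1', hc1⟩ : ∃ s1 : ℚ, 0 < s1 ∧ s1 < 1 ∧ p + s1 * (m - p) = c :=
    ⟨(c - p) / (m - p), div_pos (by linarith) hmp, (div_lt_one hmp).2 (by linarith),
      by field_simp; ring⟩
  obtain ⟨s2, hs2, hc2⟩ : ∃ s2 : ℚ, 1 < s2 ∧ q + s2 * (m - q) = c :=
    ⟨(q - c) / (q - m), (one_lt_div hqm).2 (by linarith), by field_simp; ring⟩
  have hs2' : (0:ℚ) < s2 := by linarith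
  set L1 : ℚ → ℚ := fun t => p + s1 * (t - p) with hL1
  set L2 : ℚ → ℚ := fun t => q + s2 * (t - q) with hL2
  set F : ℚ → ℚ := fun t => max (min t (L1 t)) (min t (L2 t)) with hF
  have hmono : StrictMono F := by
    intro u v huv
    have h1 : L1 u < L1 v := by
      simp only [hL1]; nlinarith [mul_lt_mul_of_pos_left huv hs1]
    have h2 : L2 u < L2 v := by
      simp only [hL2]; nlinarith [mul_lt_mul_of_pos_left huv hs2']
    exact max_lt_max (min_lt_min huv h1) (min_lt_min huv h2)
  have low : ∀ t, t ≤ p → F t = t := by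
    intro t ht
    have h1 : t ≤ L1 t := by
      simp only [hL1]
      nlinarith [mul_nonneg (by linarith : (0:ℚ) ≤ 1 - s1) (by linarith : (0:ℚ) ≤ p - t)]
    have h2 : L2 t ≤ t := by
      simp only [hL2]
      nlinarith [mul_nonneg (by linarith : (0:ℚ) ≤ s2 - 1) (by linarith : (0:ℚ) ≤ q - t)]
    simp [hF, min_eq_left h1, min_eq_right h2, max_eq_left h2]
  have high : ∀ t, q ≤ t → F t = t := by
    intro t ht
    have h1 : L1 t ≤ t := by
      simp only [hL1]
      nlinarith [mul_nonneg (by linarith : (0:ℚ) ≤ 1 - s1) (by linarith : (0:ℚ) ≤ t - p)]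
    have h2 : t ≤ L2 t := by
      simp only [hL2]
      nlinarith [mul_nonneg (by linarith : (0:ℚ) ≤ s2 - 1) (by linarith : (0:ℚ) ≤ t - q)]
    simp [hF, min_eq_right h1, min_eq_left h2, max_eq_right h1]
  have midlow : ∀ t, p ≤ t → t ≤ m → F t = L1 t := by
    intro t htp htm
    have h1 : L1 t ≤ t := by
      simp only [hL1]
      nlinarith [mul_nonneg (by linarith : (0:ℚ) ≤ 1 - s1) (by linarith : (0:ℚ) ≤ t - p)]
    have h2 : L2 t ≤ t := by
      simp only [hL2]
      nlinarith [mul_nonneg (by linarith : (0:ℚ) ≤ s2 - 1) (by linarith : (0:ℚ) ≤ q - t)]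
    have h3 : L2 t ≤ L1 t := by
      simp only [hL1, hL2]
      nlinarith [mul_nonneg (by linarith : (0:ℚ) ≤ s2 - s1) (by linarith : (0:ℚ) ≤ m - t)]
    simp [hF, min_eq_right h1, min_eq_right h2, max_eq_left h3]
  have midhigh : ∀ t, m ≤ t → t ≤ q → F t = L2 t := by
    intro t htm htq
    have h1 : L1 t ≤ t := by
      simp only [hL1]
      nlinarith [mul_nonneg (by linarith : (0:ℚ) ≤ 1 - s1) (by linarith : (0:ℚ) ≤ t - p)]
    have h2 : L2 t ≤ t := by
      simp only [hL2]
      nlinarith [mul_nonneg (by linarith : (0:ℚ) ≤ s2 - 1) (by linarith : (0:ℚ) ≤ q - t)]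
    have h3 : L1 t ≤ L2 t := by
      simp only [hL1, hL2]
      nlinarith [mul_nonneg (by linarith : (0:ℚ) ≤ s2 - s1) (by linarith : (0:ℚ) ≤ t - m)]
    simp [hF, min_eq_right h1, min_eq_right h2, max_eq_right h3]
  have hsurj : Function.Surjective F := by
    intro y
    rcases le_or_gt y p with hy | hy
    · exact ⟨y, low y hy⟩
    rcases le_or_gt q y with hy' | hy'
    · exact ⟨y, high y hy'⟩
    rcases le_or_gt y c with hyc | hyc
    · refine ⟨p + (y - p) / s1, ?_⟩
      have htp : p ≤ p + (y - p) / s1 := by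
        have := div_nonneg (by linarith : (0:ℚ) ≤ y - p) hs1.le; linarith
      have htm : p + (y - p) / s1 ≤ m := by
        have : (y - p) / s1 ≤ m - p := by
          rw [div_le_iff₀ hs1]; nlinarith
        linarith
      rw [midlow _ htp htm]
      simp only [hL1]
      rw [add_sub_cancel_left, mul_div_cancel₀ _ (ne_of_gt hs1)]
      ring
    · refine ⟨q + (y - q) / s2, ?_⟩
      have htq : q + (y - q) / s2 ≤ q := by
        have := div_nonpos_of_nonpos_of_nonneg (by linarith : y - q ≤ 0) hs2'.le; linarith
      have htm : m ≤ q + (y - q) / s2 := by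
        have : m - q ≤ (y - q) / s2 := by
          rw [le_div_iff₀ hs2']; nlinarith
        linarith
      rw [midhigh _ htm htq]
      simp only [hL2]
      rw [add_sub_cancel_left, mul_div_cancel₀ _ (ne_of_gt hs2')]
      ring
  refine ⟨StrictMono.orderIsoOfSurjective F hmono hsurj, ?_, ?_⟩
  · show F m = c
    rw [midlow m hpm.le le_rfl]
    simp only [hL1]; linarith
  · intro t ht
    show F t = t
    rcases le_or_gt t p with h | h
    · exact low t h
    · exact high t (by by_contra hq; exact ht ⟨h, not_le.1 hq⟩)

theorem orderAut_moving_in_interval (a x b : KrivineX) (hax : a < x) (hxb : x < b) :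
    ∃ π : KrivineX ≃o KrivineX, π x ≠ x ∧ ∀ y ∉ Set.Ioo a b, π y = y := by
  set α : OmegaOne := (ofLex x).1 with hα
  set m : ℚ := (ofLex x).2 with hm
  obtain ⟨p, hpm, hp⟩ : ∃ p : ℚ, p < m ∧ ∀ t : ℚ, p < t → a < toLex (α, t) := by
    rcases Prod.Lex.lt_iff.1 hax with h | ⟨h1, h2⟩
    · exact ⟨m - 1, by linarith, fun t _ => Prod.Lex.lt_iff.2 (Or.inl h)⟩
    · refine ⟨((ofLex a).2 + m) / 2, by linarith, fun t ht => ?_⟩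
      exact Prod.Lex.lt_iff.2 (Or.inr ⟨h1, show (ofLex a).2 < t by linarith⟩)
  obtain ⟨q, hmq, hq⟩ : ∃ q : ℚ, m < q ∧ ∀ t : ℚ, t < q → toLex (α, t) < b := by
    rcases Prod.Lex.lt_iff.1 hxb with h | ⟨h1, h2⟩
    · exact ⟨m + 1, by linarith, fun t _ => Prod.Lex.lt_iff.2 (Or.inl h)⟩
    · refine ⟨(m + (ofLex b).2) / 2, by linarith, fun t ht => ?_⟩
      exact Prod.Lex.lt_iff.2 (Or.inr ⟨h1, show t < (ofLex b).2 by linarith⟩)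
  set c : ℚ := (p + m) / 2 with hc
  have hpc : p < c := by rw [hc]; linarith
  have hcm : c < m := by rw [hc]; linarith
  obtain ⟨f, hfm, hfix⟩ := exists_orderIso_rat p m q c hpm hmq hpc hcm
  set G : KrivineX → KrivineX :=
    fun y => toLex ((ofLex y).1, if (ofLex y).1 = α then f (ofLex y).2 else (ofLex y).2)
    with hG
  have hGmono : StrictMono G := by
    intro u v huv
    rcases Prod.Lex.lt_iff.1 huv with h | ⟨h1, h2⟩
    · exact Prod.Lex.lt_iff.2 (Or.inl h)
    · refine Prod.Lex.lt_iff.2 (Or.inr ⟨h1, ?_⟩)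
      show (if (ofLex u).1 = α then f (ofLex u).2 else (ofLex u).2) <
        (if (ofLex v).1 = α then f (ofLex v).2 else (ofLex v).2)
      rw [h1]
      split_ifs with hcase
      · exact f.lt_iff_lt.2 h2
      · exact h2
  have hGsurj : Function.Surjective G := by
    intro z
    refine ⟨toLex ((ofLex z).1,
      if (ofLex z).1 = α then f.symm (ofLex z).2 else (ofLex z).2), ?_⟩
    simp only [hG, ofLex_toLex]
    split_ifs with hcase
    · rw [OrderIso.apply_symm_apply]; exact congrArg toLex rfl
    · exact congrArg toLex rfl
  refine ⟨StrictMono.orderIsoOfSurjective G hGmono hGsurj, ?_, ?_⟩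
  · show G x ≠ x
    intro heq
    have h2 : (ofLex (G x)).2 = (ofLex x).2 := by rw [heq]
    have h3 : f m = m := by simpa [hG, hα, hm] using h2
    rw [hfm] at h3
    linarith
  · intro y hy
    show G y = y
    by_cases hβ : (ofLex y).1 = α
    · have hyform : toLex (α, (ofLex y).2) = y := by rw [← hβ]; rfl
      by_cases htmem : (ofLex y).2 ∈ Set.Ioo p q
      · exfalso
        exact hy ⟨hyform ▸ hp _ htmem.1, hyform ▸ hq _ htmem.2⟩
      · simp only [hG, if_pos hβ, hfix _ htmem]
        exact congrArg toLex rfl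
    · simp only [hG, if_neg hβ]
      exact congrArg toLex rfl
end

section
/- Let X denote the lexicographic product ω₁ ×ₗ ℚ, and let E ⊆ X be a countable downward-closed set. Suppose x, y ∈ X ∖ E and neither x nor y is a least element of X ∖ E. Then there exists an order isomorphism π : X ≃o X such that π(x) = y and π(e) = e for every e ∈ E. -/
lemma omegaOne_add_lt {a b : Ordinal} (ha : a < (Cardinal.aleph 1).ord) (hb : b < (Cardinal.aleph 1).ord) :
    a + b < (Cardinal.aleph 1).ord :=
  Ordinal.isPrincipal_add_ord (Cardinal.aleph0_le_aleph 1) ha hb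

lemma countable_Iio_omegaOne (a : OmegaOne) : (Set.Iio a).Countable :=
  (Cardinal.countable_iff_lt_aleph_one _).2 (Cardinal.mk_Iio_toType_ord_lt a)

lemma countable_Iic_omegaOne (a : OmegaOne) : (Set.Iic a).Countable := by
  rw [← Set.Iio_insert]
  exact (countable_Iio_omegaOne a).insert a

/-- Every `Ioi` ray in `OmegaOne` is isomorphic to `OmegaOne`. -/
noncomputable def ioiIsoOmegaOne (a : OmegaOne) : OmegaOne ≃o Set.Ioi a := by
  classical
  have hlim : Order.IsSuccLimit (Cardinal.aleph 1).ord :=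
    Cardinal.isSuccLimit_ord (Cardinal.aleph0_le_aleph 1)
  let e : Set.Iio (Cardinal.aleph 1).ord ≃o OmegaOne := Ordinal.ToType.mk
  set σ : Ordinal := (e.symm a : Ordinal) with hσ
  have hσ1 : σ + 1 < (Cardinal.aleph 1).ord := by
    rw [Ordinal.add_one_eq_succ]; exact hlim.succ_lt (e.symm a).2
  have key : ∀ b : OmegaOne, σ + 1 + (e.symm b : Ordinal) < (Cardinal.aleph 1).ord :=
    fun b => omegaOne_add_lt hσ1 (e.symm b).2
  let g : OmegaOne → OmegaOne := fun b => e ⟨σ + 1 + (e.symm b : Ordinal), key b⟩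
  have hg : ∀ b, a < g b := by
    intro b
    have h1 : σ < σ + 1 + (e.symm b : Ordinal) :=
      lt_of_lt_of_le (by rw [Ordinal.add_one_eq_succ]; exact Order.lt_succ σ)
        le_self_add
    have h2 : e.symm a < (⟨σ + 1 + (e.symm b : Ordinal), key b⟩ : Set.Iio (Cardinal.aleph 1).ord) :=
      h1
    have h3 := e.strictMono h2
    rwa [e.apply_symm_apply] at h3
  let f : OmegaOne → Set.Ioi a := fun b => ⟨g b, hg b⟩
  have hmono : StrictMono f := by
    intro b₁ b₂ h
    have h' : (e.symm b₁ : Ordinal) < (e.symm b₂ : Ordinal) := e.symm.strictMono h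
    have h2 : (⟨σ + 1 + (e.symm b₁ : Ordinal), key b₁⟩ : Set.Iio (Cardinal.aleph 1).ord) <
        ⟨σ + 1 + (e.symm b₂ : Ordinal), key b₂⟩ := (add_lt_add_iff_left (σ+1)).2 h'
    exact e.strictMono h2
  have hsurj : Function.Surjective f := by
    rintro ⟨c, hc⟩
    have hlt : σ < (e.symm c : Ordinal) := e.symm.strictMono hc
    have hle : σ + 1 ≤ (e.symm c : Ordinal) := by
      rwa [Ordinal.add_one_eq_succ, Order.succ_le_iff]
    have hd : (e.symm c : Ordinal) - (σ + 1) < (Cardinal.aleph 1).ord :=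
      lt_of_le_of_lt (Ordinal.sub_le_self _ _) (e.symm c).2
    set b : OmegaOne := e ⟨(e.symm c : Ordinal) - (σ + 1), hd⟩ with hb
    refine ⟨b, Subtype.ext ?_⟩
    show g b = c
    have hb' : e.symm b = ⟨(e.symm c : Ordinal) - (σ + 1), hd⟩ := e.symm_apply_apply _
    have harg : (⟨σ + 1 + (e.symm b : Ordinal), key b⟩ : Set.Iio (Cardinal.aleph 1).ord)
        = e.symm c := by
      apply Subtype.ext
      show σ + 1 + (e.symm b : Ordinal) = (e.symm c : Ordinal)
      rw [hb']
      exact Ordinal.add_sub_cancel_of_le hle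
    show e ⟨σ + 1 + (e.symm b : Ordinal), key b⟩ = c
    rw [harg, e.apply_symm_apply]
  exact StrictMono.orderIsoOfSurjective f hmono hsurj

noncomputable def qIoiIso (p q : ℚ) : ↥(Set.Ioi p) ≃o ↥(Set.Ioi q) :=
  (Order.iso_of_countable_dense _ _).some

lemma krivine_dense (a b : KrivineX) (h : a < b) : ∃ c, a < c ∧ c < b := by
  rcases (Prod.Lex.lt_iff (x := a) (y := b)).1 h with h1 | ⟨h1, h2⟩
  · refine ⟨toLex ((ofLex a).1, (ofLex a).2 + 1), ?_, ?_⟩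
    · exact Prod.Lex.lt_iff.2 (Or.inr ⟨rfl, lt_add_one _⟩)
    · exact Prod.Lex.lt_iff.2 (Or.inl h1)
  · obtain ⟨r, hr1, hr2⟩ := exists_between h2
    refine ⟨toLex ((ofLex a).1, r), ?_, ?_⟩
    · exact Prod.Lex.lt_iff.2 (Or.inr ⟨rfl, hr1⟩)
    · exact Prod.Lex.lt_iff.2 (Or.inr ⟨h1, hr2⟩)

instance inst_s15 : DenselyOrdered KrivineX := ⟨krivine_dense⟩

/-- Any two open rays in `KrivineX` are order isomorphic. -/
noncomputable def rayIso (x y : KrivineX) : ↥(Set.Ioi x) ≃o ↥(Set.Ioi y) := by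
  classical
  let iQ := qIoiIso (ofLex x).2 (ofLex y).2
  let iO : ↥(Set.Ioi (ofLex x).1) ≃o ↥(Set.Ioi (ofLex y).1) :=
    (ioiIsoOmegaOne (ofLex x).1).symm.trans (ioiIsoOmegaOne (ofLex y).1)
  have mem2 : ∀ z : ↥(Set.Ioi x), (ofLex z.1).1 = (ofLex x).1 →
      (ofLex x).2 < (ofLex z.1).2 := by
    intro z h
    rcases (Prod.Lex.lt_iff (x := x) (y := z.1)).1 z.2 with h1 | ⟨_, h2⟩
    · rw [h] at h1; exact absurd h1 (lt_irrefl _)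
    · exact h2
  have mem1 : ∀ z : ↥(Set.Ioi x), (ofLex z.1).1 ≠ (ofLex x).1 →
      (ofLex x).1 < (ofLex z.1).1 := by
    intro z h
    rcases (Prod.Lex.lt_iff (x := x) (y := z.1)).1 z.2 with h1 | ⟨h1, _⟩
    · exact h1
    · exact absurd h1.symm h
  let f : ↥(Set.Ioi x) → ↥(Set.Ioi y) := fun z =>
    if h : (ofLex z.1).1 = (ofLex x).1 then
      ⟨toLex ((ofLex y).1, (iQ ⟨(ofLex z.1).2, mem2 z h⟩ : ℚ)),
        Prod.Lex.lt_iff.2 (Or.inr ⟨rfl, (iQ _).2⟩)⟩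
    else
      ⟨toLex ((iO ⟨(ofLex z.1).1, mem1 z h⟩ : OmegaOne), (ofLex z.1).2),
        Prod.Lex.lt_iff.2 (Or.inl (iO _).2)⟩
  have hmono : StrictMono f := by
    rintro z₁ z₂ hz
    have hz' : z₁.1 < z₂.1 := hz
    by_cases h1 : (ofLex z₁.1).1 = (ofLex x).1 <;>
      by_cases h2 : (ofLex z₂.1).1 = (ofLex x).1 <;>
      simp only [f, dif_pos, dif_neg, h1, h2, dite_true, dite_false]
    · -- both in the bottom fiber
      rcases (Prod.Lex.lt_iff (x := z₁.1) (y := z₂.1)).1 hz' with hl | ⟨_, hl⟩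
      · rw [h1, h2] at hl; exact absurd hl (lt_irrefl _)
      · show (⟨_, _⟩ : ↥(Set.Ioi y)) < ⟨_, _⟩
        refine Subtype.mk_lt_mk.2 ?_
        refine Prod.Lex.lt_iff.2 (Or.inr ⟨rfl, ?_⟩)
        exact iQ.strictMono (Subtype.mk_lt_mk.2 hl)
    · show (⟨_, _⟩ : ↥(Set.Ioi y)) < ⟨_, _⟩
      refine Subtype.mk_lt_mk.2 ?_
      exact Prod.Lex.lt_iff.2 (Or.inl (iO _).2)
    · exfalso
      have := Prod.Lex.monotone_fst _ _ hz'.le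
      rw [h2] at this
      exact absurd (lt_of_lt_of_le (mem1 z₁ h1) this) (lt_irrefl _)
    · rcases (Prod.Lex.lt_iff (x := z₁.1) (y := z₂.1)).1 hz' with hl | ⟨heq, hl⟩
      · show (⟨_, _⟩ : ↥(Set.Ioi y)) < ⟨_, _⟩
        refine Subtype.mk_lt_mk.2 ?_
        refine Prod.Lex.lt_iff.2 (Or.inl ?_)
        exact iO.strictMono (Subtype.mk_lt_mk.2 hl)
      · show (⟨_, _⟩ : ↥(Set.Ioi y)) < ⟨_, _⟩
        refine Subtype.mk_lt_mk.2 ?_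
        refine Prod.Lex.lt_iff.2 (Or.inr ⟨?_, hl⟩)
        have : (⟨(ofLex z₁.1).1, mem1 z₁ h1⟩ : ↥(Set.Ioi (ofLex x).1))
            = ⟨(ofLex z₂.1).1, mem1 z₂ h2⟩ := Subtype.ext heq
        rw [this]
        rfl
  have hsurj : Function.Surjective f := by
    rintro ⟨w, hw⟩
    have mem2' : (ofLex w).1 = (ofLex y).1 → (ofLex y).2 < (ofLex w).2 := by
      intro h
      rcases (Prod.Lex.lt_iff (x := y) (y := w)).1 hw with h1 | ⟨_, h2⟩
      · rw [h] at h1; exact absurd h1 (lt_irrefl _)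
      · exact h2
    have mem1' : (ofLex w).1 ≠ (ofLex y).1 → (ofLex y).1 < (ofLex w).1 := by
      intro h
      rcases (Prod.Lex.lt_iff (x := y) (y := w)).1 hw with h1 | ⟨h1, _⟩
      · exact h1
      · exact absurd h1.symm h
    by_cases h : (ofLex w).1 = (ofLex y).1
    · set r : ↥(Set.Ioi (ofLex x).2) := iQ.symm ⟨(ofLex w).2, mem2' h⟩ with hr
      refine ⟨⟨toLex ((ofLex x).1, (r : ℚ)), Prod.Lex.lt_iff.2 (Or.inr ⟨rfl, r.2⟩)⟩, ?_⟩
      have hcond : (ofLex (toLex ((ofLex x).1, (r : ℚ)))).1 = (ofLex x).1 := rfl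
      apply Subtype.ext
      show (if h' : _ then _ else _ : ↥(Set.Ioi y)).1 = w
      rw [dif_pos hcond]
      show toLex ((ofLex y).1, (iQ ⟨(r : ℚ), r.2⟩ : ℚ)) = w
      have : (⟨(r : ℚ), r.2⟩ : ↥(Set.Ioi (ofLex x).2)) = r := Subtype.ext rfl
      rw [this, hr, iQ.apply_symm_apply]
      show toLex ((ofLex y).1, (ofLex w).2) = w
      rw [← h]
      exact congrArg toLex (Prod.mk.eta)
    · set u : ↥(Set.Ioi (ofLex x).1) := iO.symm ⟨(ofLex w).1, mem1' h⟩ with hu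
      refine ⟨⟨toLex ((u : OmegaOne), (ofLex w).2), Prod.Lex.lt_iff.2 (Or.inl u.2)⟩, ?_⟩
      have hcond : (ofLex (toLex ((u : OmegaOne), (ofLex w).2))).1 ≠ (ofLex x).1 :=
        ne_of_gt u.2
      apply Subtype.ext
      show (if h' : _ then _ else _ : ↥(Set.Ioi y)).1 = w
      rw [dif_neg hcond]
      show toLex ((iO ⟨(u : OmegaOne), u.2⟩ : OmegaOne), (ofLex w).2) = w
      have : (⟨(u : OmegaOne), u.2⟩ : ↥(Set.Ioi (ofLex x).1)) = u := Subtype.ext rfl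
      rw [this, hu, iO.apply_symm_apply]
      exact congrArg toLex (Prod.mk.eta)
  exact StrictMono.orderIsoOfSurjective f hmono hsurj

theorem orderAut_fixing_initial_segment (E : Set KrivineX) (hE : E.Countable)
    (hdc : ∀ y e : KrivineX, e ∈ E → y ≤ e → y ∈ E)
    (x y : KrivineX) (hx : x ∉ E) (hy : y ∉ E)
    (hxl : ¬ IsLeast Eᶜ x) (hyl : ¬ IsLeast Eᶜ y) :
    ∃ π : KrivineX ≃o KrivineX, π x = y ∧ ∀ e ∈ E, π e = e := by
  classical
  have hup : ∀ {z w : KrivineX}, z ∉ E → z ≤ w → w ∉ E :=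
    fun {z w} hz hzw hw => hz (hdc _ _ hw hzw)
  have hnl : ∀ {z w : KrivineX}, z ∉ E → z < w → ¬ IsLeast Eᶜ w := by
    intro z w hz hzw hleast
    exact absurd (hleast.2 hz) (not_le.mpr hzw)
  -- the set of elements below w which are neither in E nor the least element of Eᶜ
  set B : KrivineX → Set KrivineX :=
    fun w => {z | z ∉ E ∧ ¬ IsLeast Eᶜ z ∧ z < w} with hB
  -- generic facts about B w for w ∉ E not least
  have hBne : ∀ w, w ∉ E → ¬ IsLeast Eᶜ w → (B w).Nonempty := by
    intro w hw hwl
    have : ∃ z, z ∈ Eᶜ ∧ ¬ w ≤ z := by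
      by_contra hcon
      push_neg at hcon
      exact hwl ⟨hw, fun b hb => hcon b hb⟩
    obtain ⟨z, hz1, hz2⟩ := this
    obtain ⟨c, hc1, hc2⟩ := krivine_dense z w (not_le.mp hz2)
    exact ⟨c, hup hz1 hc1.le, hnl hz1 hc1, hc2⟩
  have hBcnt : ∀ w, (B w).Countable := by
    intro w
    have hsub : B w ⊆ (fun p : OmegaOne × ℚ => toLex p) '' ((Set.Iic (ofLex w).1) ×ˢ Set.univ) := by
      intro z hz
      refine ⟨ofLex z, ⟨?_, trivial⟩, rfl⟩
      exact Prod.Lex.monotone_fst _ _ hz.2.2.le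
    exact Set.Countable.mono hsub
      ((((countable_Iic_omegaOne (ofLex w).1)).prod (Set.countable_univ_iff.2 inferInstance)).image _)
  have hBdense : ∀ w, DenselyOrdered ↥(B w) := by
    intro w
    constructor
    rintro ⟨a, ha⟩ ⟨b, hb⟩ hab
    rw [Subtype.mk_lt_mk] at hab
    obtain ⟨c, hc1, hc2⟩ := krivine_dense a b hab
    exact ⟨⟨c, hup ha.1 hc1.le, hnl ha.1 hc1, hc2.trans hb.2.2⟩,
      Subtype.mk_lt_mk.2 hc1, Subtype.mk_lt_mk.2 hc2⟩
  have hBnomax : ∀ w, NoMaxOrder ↥(B w) := by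
    intro w
    constructor
    rintro ⟨a, ha⟩
    obtain ⟨c, hc1, hc2⟩ := krivine_dense a w ha.2.2
    exact ⟨⟨c, hup ha.1 hc1.le, hnl ha.1 hc1, hc2⟩, Subtype.mk_lt_mk.2 hc1⟩
  have hBnomin : ∀ w, NoMinOrder ↥(B w) := by
    intro w
    constructor
    rintro ⟨a, ha⟩
    have : ∃ z, z ∈ Eᶜ ∧ ¬ a ≤ z := by
      by_contra hcon
      push_neg at hcon
      exact ha.2.1 ⟨ha.1, fun b hb => hcon b hb⟩
    obtain ⟨z, hz1, hz2⟩ := this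
    obtain ⟨c, hc1, hc2⟩ := krivine_dense z a (not_le.mp hz2)
    exact ⟨⟨c, hup hz1 hc1.le, hnl hz1 hc1, hc2.trans ha.2.2⟩, Subtype.mk_lt_mk.2 hc2⟩
  -- the order isomorphism between B x and B y
  haveI := hBdense x; haveI := hBdense y
  haveI := hBnomax x; haveI := hBnomax y
  haveI := hBnomin x; haveI := hBnomin y
  haveI := (hBcnt x).to_subtype; haveI := (hBcnt y).to_subtype
  haveI := (hBne x hx hxl).to_subtype; haveI := (hBne y hy hyl).to_subtype
  obtain ⟨gB⟩ : Nonempty (↥(B x) ≃o ↥(B y)) := Order.iso_of_countable_dense _ _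
  let gA : ↥(Set.Ioi x) ≃o ↥(Set.Ioi y) := rayIso x y
  -- the map
  let f : KrivineX → KrivineX := fun z =>
    if hb : z ∈ B x then (gB ⟨z, hb⟩ : KrivineX)
    else if hmid : z = x then y
    else if ha : x < z then (gA ⟨z, ha⟩ : KrivineX)
    else z
  -- value lemmas
  have hflow : ∀ z, z ∈ E ∨ IsLeast Eᶜ z → f z = z := by
    intro z hz
    have h1 : z ∉ B x := by
      rintro ⟨hz1, hz2, -⟩
      rcases hz with h | h
      · exact hz1 h
      · exact hz2 h
    have h2 : z ≠ x := by
      rintro rfl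
      rcases hz with h | h
      · exact hx h
      · exact hxl h
    have h3 : ¬ x < z := by
      intro hlt
      rcases hz with h | h
      · exact hx (hdc x z h hlt.le)
      · exact absurd (h.2 hx) (not_le.mpr hlt)
    show (if hb : z ∈ B x then _ else if hmid : z = x then _ else if ha : x < z then _ else z) = z
    rw [dif_neg h1, dif_neg h2, dif_neg h3]
  have hfB : ∀ z (h : z ∈ B x), f z = (gB ⟨z, h⟩ : KrivineX) := by
    intro z h
    show (if hb : z ∈ B x then (gB ⟨z, hb⟩ : KrivineX) else _) = _
    rw [dif_pos h]
  have hfx : f x = y := by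
    have h1 : x ∉ B x := fun h => absurd h.2.2 (lt_irrefl x)
    show (if hb : x ∈ B x then _ else if hmid : x = x then y else _) = y
    rw [dif_neg h1, dif_pos rfl]
  have hfA : ∀ z (h : x < z), f z = (gA ⟨z, h⟩ : KrivineX) := by
    intro z h
    have h1 : z ∉ B x := fun hc => absurd (hc.2.2.trans h) (lt_irrefl z)
    have h2 : z ≠ x := ne_of_gt h
    show (if hb : z ∈ B x then _ else if hmid : z = x then _ else if ha : x < z then
      (gA ⟨z, ha⟩ : KrivineX) else _) = _
    rw [dif_neg h1, dif_neg h2, dif_pos h]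
  -- ordering: low region is below everything not in E and not least
  have hlow : ∀ z, z ∈ E ∨ IsLeast Eᶜ z → ∀ w : KrivineX, w ∉ E → ¬ IsLeast Eᶜ w → z < w := by
    intro z hz w hw hwl
    rcases hz with hz | hz
    · exact not_le.mp fun h => hw (hdc _ _ hz h)
    · refine lt_of_le_of_ne (hz.2 hw) fun h => hwl (h ▸ hz)
  have hmono : StrictMono f := by
    intro a b hab
    rcases Classical.em (a ∈ E ∨ IsLeast Eᶜ a) with ha | ha
    · rw [hflow a ha]
      rcases Classical.em (b ∈ E ∨ IsLeast Eᶜ b) with hb | hb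
      · rw [hflow b hb]; exact hab
      · push_neg at hb
        rcases lt_trichotomy b x with h | h | h
        · rw [hfB b ⟨hb.1, hb.2, h⟩]
          exact hlow a ha _ (gB _).2.1 (gB _).2.2.1
        · subst h; rw [hfx]; exact hlow a ha y hy hyl
        · rw [hfA b h]
          exact (hlow a ha y hy hyl).trans (gA _).2
    · push_neg at ha
      have hb1 : b ∉ E := hup ha.1 hab.le
      have hb2 : ¬ IsLeast Eᶜ b := hnl ha.1 hab
      rcases lt_trichotomy a x with h | h | h
      · rw [hfB a ⟨ha.1, ha.2, h⟩]
        rcases lt_trichotomy b x with h' | h' | h'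
        · rw [hfB b ⟨hb1, hb2, h'⟩]
          have : (⟨a, ha.1, ha.2, h⟩ : ↥(B x)) < ⟨b, hb1, hb2, h'⟩ := Subtype.mk_lt_mk.2 hab
          exact gB.strictMono this
        · subst h'; rw [hfx]; exact (gB _).2.2.2
        · rw [hfA b h']
          exact ((gB _).2.2.2).trans (gA _).2
      · subst h
        rw [hfx, hfA b hab]
        exact (gA _).2
      · rw [hfA a h, hfA b (h.trans hab)]
        have : (⟨a, h⟩ : ↥(Set.Ioi x)) < ⟨b, h.trans hab⟩ := Subtype.mk_lt_mk.2 hab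
        exact gA.strictMono this
  have hsurj : Function.Surjective f := by
    intro w
    rcases Classical.em (w ∈ E ∨ IsLeast Eᶜ w) with hw | hw
    · exact ⟨w, hflow w hw⟩
    · push_neg at hw
      rcases lt_trichotomy w y with h | h | h
      · set z : ↥(B x) := gB.symm ⟨w, hw.1, hw.2, h⟩ with hz
        refine ⟨z, ?_⟩
        rw [hfB z z.2]
        have : (⟨(z : KrivineX), z.2⟩ : ↥(B x)) = z := Subtype.ext rfl
        rw [this, hz, gB.apply_symm_apply]
      · exact ⟨x, by rw [hfx, h]⟩
      · set z : ↥(Set.Ioi x) := gA.symm ⟨w, h⟩ with hz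
        refine ⟨z, ?_⟩
        rw [hfA z z.2]
        have : (⟨(z : KrivineX), z.2⟩ : ↥(Set.Ioi x)) = z := Subtype.ext rfl
        rw [this, hz, gA.apply_symm_apply]
  refine ⟨StrictMono.orderIsoOfSurjective f hmono hsurj, ?_, ?_⟩
  · show f x = y
    exact hfx
  · intro e he
    show f e = e
    exact hflow e (Or.inl he)
end

section
/- Let X denote the lexicographic product ω₁ ×ₗ ℚ, and let E ⊆ X be a countable downward-closed set. Then the set {z ∈ X | z ∉ E and z is not a least element of X ∖ E}, with the order induced from X, is order-isomorphic to X. -/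
namespace KrivineAux

open Cardinal Set

lemma fst_mono {x y : KrivineX} (h : x ≤ y) : (ofLex x).1 ≤ (ofLex y).1 := by
  rcases Prod.Lex.le_iff.1 h with h1 | ⟨h1, _⟩
  · exact h1.le
  · exact h1.le

lemma lt_of_fst_lt {x y : KrivineX} (h : (ofLex x).1 < (ofLex y).1) : x < y :=
  Prod.Lex.lt_iff.2 (Or.inl h)

lemma lt_of_fst_eq {x y : KrivineX} (h1 : (ofLex x).1 = (ofLex y).1)
    (h2 : (ofLex x).2 < (ofLex y).2) : x < y :=
  Prod.Lex.lt_iff.2 (Or.inr ⟨h1, h2⟩)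

/-- bump the rational coordinate up -/
def bump (x : KrivineX) : KrivineX := toLex ((ofLex x).1, (ofLex x).2 + 1)

def dump (x : KrivineX) : KrivineX := toLex ((ofLex x).1, (ofLex x).2 - 1)

lemma lt_bump (x : KrivineX) : x < bump x := lt_of_fst_eq rfl (by simp [bump])

lemma dump_lt (x : KrivineX) : dump x < x := lt_of_fst_eq rfl (by simp [dump])

@[simp] lemma bump_fst (x : KrivineX) : (ofLex (bump x)).1 = (ofLex x).1 := rfl
@[simp] lemma dump_fst (x : KrivineX) : (ofLex (dump x)).1 = (ofLex x).1 := rfl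

lemma X_dense {x y : KrivineX} (h : x < y) : ∃ z, x < z ∧ z < y := by
  rcases Prod.Lex.lt_iff.1 h with h1 | ⟨h1, h2⟩
  · exact ⟨bump x, lt_bump x, lt_of_fst_lt (by simpa using h1)⟩
  · obtain ⟨q, hq1, hq2⟩ := exists_between h2
    exact ⟨toLex ((ofLex x).1, q), lt_of_fst_eq rfl hq1, lt_of_fst_eq h1 hq2⟩

noncomputable def eIso : Set.Iio (Cardinal.aleph 1).ord ≃o OmegaOne :=
  Ordinal.ToType.mk

lemma exists_upper (C : Set OmegaOne) (hC : C.Countable) : ∃ a : OmegaOne, ∀ c ∈ C, c < a := by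
  haveI : Countable C := hC.to_subtype
  set f : C → Ordinal := fun c => (eIso.symm c.1).1 with hf
  have hflt : ∀ c, f c < (Cardinal.aleph 1).ord := fun c => (eIso.symm c.1).2
  have hsup : (⨆ c, f c) < (Cardinal.aleph 1).ord := by
    apply Ordinal.iSup_lt_ord _ hflt
    rw [Cardinal.isRegular_aleph_one.cof_eq]
    exact lt_of_le_of_lt Cardinal.mk_le_aleph0 Cardinal.aleph0_lt_aleph_one
  have hsup1 : (⨆ c, f c) + 1 < (Cardinal.aleph 1).ord := by
    have := (Cardinal.isSuccLimit_ord (Cardinal.aleph0_le_aleph 1)).succ_lt hsup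
    rwa [Ordinal.add_one_eq_succ]
  refine ⟨eIso ⟨_, hsup1⟩, fun c hc => ?_⟩
  have h1 : f ⟨c, hc⟩ ≤ ⨆ c, f c := Ordinal.le_iSup f ⟨c, hc⟩
  have h2 : eIso.symm c < ⟨(⨆ c, f c) + 1, hsup1⟩ := by
    rw [← Subtype.coe_lt_coe]
    exact lt_of_le_of_lt h1 (lt_add_one _)
  calc c = eIso (eIso.symm c) := (eIso.apply_symm_apply c).symm
    _ < _ := eIso.lt_iff_lt.2 h2

lemma countable_Iic (a : OmegaOne) : (Set.Iic a).Countable := by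
  have h1 : (Set.Iio a).Countable :=
    (Cardinal.countable_iff_lt_aleph_one _).2 (Cardinal.mk_Iio_ord_toType a)
  rw [← Set.Iio_insert]
  exact h1.insert a

section Split

variable {X : Type*} [LinearOrder X]

noncomputable def splitIso (A B : Set X) (hAB : ∀ a ∈ A, ∀ b ∈ B, a < b) :
    ↥(A ∪ B) ≃o ↥A ⊕ₗ ↥B := by
  classical
  have hd : ∀ x : X, x ∈ B → x ∉ A := fun x hB hA => lt_irrefl x (hAB x hA x hB)
  set f : ↥(A ∪ B) → ↥A ⊕ₗ ↥B := fun x =>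
    if h : (x : X) ∈ A then toLex (Sum.inl ⟨x, h⟩) else toLex (Sum.inr ⟨x, x.2.resolve_left h⟩)
    with hf
  have hmono : StrictMono f := by
    intro x y hxy
    by_cases hx : (x : X) ∈ A <;> by_cases hy : (y : X) ∈ A <;>
      simp only [hf, dif_pos, dif_neg, hx, hy]
    · exact Sum.Lex.inl_lt_inl_iff.2 hxy
    · exact Sum.Lex.inl_lt_inr _ _
    · exact absurd (hAB _ hy _ (x.2.resolve_left hx)) (lt_asymm hxy)
    · exact Sum.Lex.inr_lt_inr_iff.2 hxy
  have hsurj : Function.Surjective f := by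
    rintro (a | b)
    · exact ⟨⟨a.1, Or.inl a.2⟩, by simp only [hf, dif_pos a.2]; rfl⟩
    · exact ⟨⟨b.1, Or.inr b.2⟩, by simp only [hf, dif_neg (hd b.1 b.2)]; rfl⟩
  exact StrictMono.orderIsoOfSurjective f hmono hsurj

def sumLexCongr {α β γ δ : Type*} [Preorder α] [Preorder β] [Preorder γ] [Preorder δ]
    (e : α ≃o β) (g : γ ≃o δ) : α ⊕ₗ γ ≃o β ⊕ₗ δ where
  toEquiv := (ofLex (α := α ⊕ γ)).trans ((Equiv.sumCongr e.toEquiv g.toEquiv).trans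
    (toLex (α := β ⊕ δ)))
  map_rel_iff' := by
    rintro (a | c) (a' | c')
    · exact Sum.lex_inl_inl.trans (e.le_iff_le.trans Sum.lex_inl_inl.symm)
    · exact iff_of_true (Sum.Lex.sep _ _) (Sum.Lex.sep _ _)
    · exact iff_of_false (fun h => by cases h) (fun h => by cases h)
    · exact Sum.lex_inr_inr.trans (g.le_iff_le.trans Sum.lex_inr_inr.symm)

end Split

lemma denseSub {s : Set KrivineX}
    (h : ∀ x y z : KrivineX, x ∈ s → y ∈ s → x < z → z < y → z ∈ s) :
    DenselyOrdered ↥s := by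
  constructor
  rintro ⟨x, hx⟩ ⟨y, hy⟩ hxy
  rw [Subtype.mk_lt_mk] at hxy
  obtain ⟨z, hz1, hz2⟩ := X_dense hxy
  exact ⟨⟨z, h x y z hx hy hz1 hz2⟩, Subtype.mk_lt_mk.2 hz1, Subtype.mk_lt_mk.2 hz2⟩

lemma noMaxSub {s : Set KrivineX} (h : ∀ x ∈ s, bump x ∈ s) : NoMaxOrder ↥s :=
  ⟨fun x => ⟨⟨bump x.1, h x.1 x.2⟩, Subtype.mk_lt_mk.2 (lt_bump x.1)⟩⟩

lemma noMinSub {s : Set KrivineX} (h : ∀ x ∈ s, dump x ∈ s) : NoMinOrder ↥s :=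
  ⟨fun x => ⟨⟨dump x.1, h x.1 x.2⟩, Subtype.mk_lt_mk.2 (dump_lt x.1)⟩⟩

theorem mainIso (D : Set KrivineX) (hD : D.Countable)
    (hdc : ∀ y e : KrivineX, e ∈ D → y ≤ e → y ∈ D)
    (hnl : ∀ z : KrivineX, ¬ IsLeast Dᶜ z) :
    Nonempty (↥(Dᶜ) ≃o KrivineX) := by
  obtain ⟨a, ha⟩ := exists_upper ((fun x : KrivineX => (ofLex x).1) '' D) (hD.image _)
  have hDa : ∀ d ∈ D, (ofLex d).1 < a := fun d hd => ha _ ⟨d, hd, rfl⟩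
  set Low : Set KrivineX := {x | (ofLex x).1 ≤ a} with hLowdef
  set Tail : Set KrivineX := {x | a < (ofLex x).1} with hTaildef
  set C : Set KrivineX := Dᶜ ∩ Low with hCdef
  have hLowCount : Low.Countable := by
    have hsub : Low ⊆ (fun p : OmegaOne × ℚ => toLex p) '' (Set.Iic a ×ˢ Set.univ) := by
      intro x hx
      exact ⟨ofLex x, ⟨hx, trivial⟩, rfl⟩
    exact (((countable_Iic a).prod Set.countable_univ).image _).mono hsub
  have hTailD : ∀ x ∈ Tail, x ∉ D := fun x hx hxD => lt_asymm hx (hDa x hxD)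
  have hsplit1 : Dᶜ = C ∪ Tail := by
    ext x
    constructor
    · intro hx
      rcases le_or_gt (ofLex x).1 a with h | h
      · exact Or.inl ⟨hx, h⟩
      · exact Or.inr h
    · rintro (⟨hx, -⟩ | hx)
      · exact hx
      · exact hTailD x hx
  have hsplit2 : (Set.univ : Set KrivineX) = Low ∪ Tail := by
    ext x
    simpa [hLowdef, hTaildef] using (le_or_gt (ofLex x).1 a)
  have hCT : ∀ x ∈ C, ∀ y ∈ Tail, x < y := fun x hx y hy =>
    lt_of_fst_lt (lt_of_le_of_lt hx.2 hy)
  have hLT : ∀ x ∈ Low, ∀ y ∈ Tail, x < y := fun x hx y hy =>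
    lt_of_fst_lt (lt_of_le_of_lt hx hy)
  have hup : ∀ x y : KrivineX, x ∈ Dᶜ → x ≤ y → y ∈ Dᶜ :=
    fun x y hx hxy hyD => hx (hdc x y hyD hxy)
  -- instances for Cantor's theorem
  haveI : Countable ↥Low := hLowCount.to_subtype
  haveI : Countable ↥C := (hLowCount.mono Set.inter_subset_right).to_subtype
  haveI : Nonempty ↥Low := ⟨⟨toLex (a, 0), le_refl a⟩⟩
  have haD : toLex (a, (0:ℚ)) ∈ Dᶜ := fun h => lt_irrefl a (hDa _ h)
  haveI : Nonempty ↥C := ⟨⟨toLex (a, 0), haD, le_refl a⟩⟩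
  haveI : DenselyOrdered ↥Low :=
    denseSub (fun x y z _ hy _ hzy => (fst_mono hzy.le).trans hy)
  haveI : DenselyOrdered ↥C :=
    denseSub (fun x y z hx hy hxz hzy =>
      ⟨hup x z hx.1 hxz.le, (fst_mono hzy.le).trans hy.2⟩)
  haveI : NoMaxOrder ↥Low := noMaxSub (fun x hx => hx)
  haveI : NoMaxOrder ↥C := noMaxSub (fun x hx => ⟨hup x (bump x) hx.1 (lt_bump x).le, hx.2⟩)
  haveI : NoMinOrder ↥Low := noMinSub (fun x hx => hx)
  haveI : NoMinOrder ↥C := by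
    constructor
    rintro ⟨x, hxD, hxa⟩
    have h2 : ∃ w ∈ Dᶜ, w < x := by
      by_contra hcon
      push_neg at hcon
      exact hnl x ⟨hxD, fun w hw => hcon w hw⟩
    obtain ⟨w, hw, hwx⟩ := h2
    exact ⟨⟨w, hw, (fst_mono hwx.le).trans hxa⟩, Subtype.mk_lt_mk.2 hwx⟩
  obtain ⟨e3⟩ : Nonempty (↥C ≃o ↥Low) := Order.iso_of_countable_dense ↥C ↥Low
  let E1 : ↥(Dᶜ) ≃o ↥C ⊕ₗ ↥Tail :=
    (OrderIso.setCongr _ _ hsplit1).trans (splitIso C Tail hCT)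
  let E2 : ↥(Set.univ : Set KrivineX) ≃o ↥Low ⊕ₗ ↥Tail :=
    (OrderIso.setCongr _ _ hsplit2).trans (splitIso Low Tail hLT)
  exact ⟨E1.trans ((sumLexCongr e3 (OrderIso.refl ↥Tail)).trans
    (E2.symm.trans OrderIso.Set.univ))⟩

end KrivineAux

theorem compl_of_countable_initial_segment_orderIso (E : Set KrivineX) (hE : E.Countable)
    (hdc : ∀ y e : KrivineX, e ∈ E → y ≤ e → y ∈ E) :
    Nonempty (↥{z : KrivineX | z ∉ E ∧ ¬ IsLeast Eᶜ z} ≃o KrivineX) := by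
  classical
  by_cases hex : ∃ m, IsLeast Eᶜ m
  · obtain ⟨m, hm⟩ := hex
    have hset : {z : KrivineX | z ∉ E ∧ ¬ IsLeast Eᶜ z} = (E ∪ {m})ᶜ := by
      ext z
      simp only [Set.mem_setOf_eq, Set.mem_compl_iff, Set.mem_union, Set.mem_singleton_iff, not_or]
      constructor
      · rintro ⟨h1, h2⟩
        exact ⟨h1, fun hzm => h2 (hzm ▸ hm)⟩
      · rintro ⟨h1, h2⟩
        exact ⟨h1, fun hz => h2 (hz.unique hm)⟩
    rw [hset]
    apply KrivineAux.mainIso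
    · exact hE.union (Set.countable_singleton m)
    · intro y e he hye
      rcases he with he | he
      · exact Or.inl (hdc y e he hye)
      · rw [Set.mem_singleton_iff] at he
        subst he
        rcases eq_or_lt_of_le hye with rfl | hlt
        · exact Or.inr rfl
        · by_cases hyE : y ∈ E
          · exact Or.inl hyE
          · exact absurd (hm.2 hyE) (not_le.2 hlt)
    · intro z hz
      have hzm : m < z := by
        have h1 : z ∉ E := fun h => hz.1 (Or.inl h)
        have h2 : z ≠ m := fun h => hz.1 (Or.inr h)
        exact lt_of_le_of_ne (hm.2 h1) (Ne.symm h2)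
      obtain ⟨w, hw1, hw2⟩ := KrivineAux.X_dense hzm
      have hwE : w ∉ E := fun h => hm.1 (hdc m w h hw1.le)
      have hwm : w ∈ (E ∪ {m})ᶜ := by
        rintro (h | h)
        · exact hwE h
        · rw [Set.mem_singleton_iff] at h
          exact lt_irrefl m (h ▸ hw1)
      exact absurd (hz.2 hwm) (not_le.2 hw2)
  · push_neg at hex
    have hset : {z : KrivineX | z ∉ E ∧ ¬ IsLeast Eᶜ z} = Eᶜ := by
      ext z
      simp [hex z]
    rw [hset]
    exact KrivineAux.mainIso E hE hdc hex
end

section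
/- Fix a family of types X_n indexed by n ∈ ℕ, and for S ⊆ ℕ let A_S denote the dependent product Π_{n ∈ S} (ℕ → X_n). Then for all S, T ⊆ ℕ there is a bijection (an equivalence of types) between A_S × A_T and A_{S ∪ T}. -/
theorem prod_equiv_union_of_seq_product (X : ℕ → Type*) (S T : Set ℕ) :
    Nonempty (((∀ n : S, ℕ → X n) × (∀ n : T, ℕ → X n)) ≃
      (∀ n : ↥(S ∪ T), ℕ → X n)) := by
  classical
  refine ⟨{
    toFun := fun p n k =>
      if hS : (n : ℕ) ∈ S then
        if hT : (n : ℕ) ∈ T then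
          if k % 2 = 0 then p.1 ⟨n, hS⟩ (k / 2) else p.2 ⟨n, hT⟩ (k / 2)
        else p.1 ⟨n, hS⟩ k
      else p.2 ⟨n, n.2.resolve_left hS⟩ k,
    invFun := fun h =>
      (fun n k => if (n : ℕ) ∈ T then h ⟨n, Or.inl n.2⟩ (2 * k) else h ⟨n, Or.inl n.2⟩ k,
       fun n k => if (n : ℕ) ∈ S then h ⟨n, Or.inr n.2⟩ (2 * k + 1) else h ⟨n, Or.inr n.2⟩ k),
    left_inv := ?_,
    right_inv := ?_ }⟩
  · rintro ⟨f, g⟩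
    refine Prod.ext ?_ ?_ <;> funext n k <;> dsimp
    · by_cases hT : (n : ℕ) ∈ T
      · rw [if_pos hT, dif_pos n.2, dif_pos hT, if_pos (by omega : 2 * k % 2 = 0)]
        have h2 : 2 * k / 2 = k := by omega
        rw [h2]
      · rw [if_neg hT, dif_pos n.2, dif_neg hT]
    · by_cases hS : (n : ℕ) ∈ S
      · rw [if_pos hS, dif_pos hS, dif_pos n.2, if_neg (by omega : ¬ (2 * k + 1) % 2 = 0)]
        have h2 : (2 * k + 1) / 2 = k := by omega
        rw [h2]
      · rw [if_neg hS, dif_neg hS]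
  · intro h
    funext n k
    dsimp
    by_cases hS : (n : ℕ) ∈ S
    · rw [dif_pos hS]
      by_cases hT : (n : ℕ) ∈ T
      · rw [dif_pos hT]
        by_cases hk : k % 2 = 0
        · rw [if_pos hk, if_pos hT]
          have h2 : 2 * (k / 2) = k := by omega
          rw [h2]
        · rw [if_neg hk, if_pos hS]
          have h2 : 2 * (k / 2) + 1 = k := by omega
          rw [h2]
      · rw [dif_neg hT, if_neg hT]
    · rw [dif_neg hS, if_neg hS]
end
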